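/- arXiv:2103.09308 — 2 statements merged into one kernel-verified Lean document; each statement's English description precedes it below -/
import Mathlib

section
/- For any finite set P of n points in R^d, there exists a point c in R^d such that every closed halfspace containing c contains at least n/(d+1) points of P. -/
open Finset

/-- **Centerpoint theorem.** For any finite set `P` of `n` points in `ℝ^d`, there exists a
point `c` such that every closed halfspace containing `c` contains at least `n/(d+1)`
points of `P`. -/
theorem centerpoint_exists (d : ℕ) (P : Finset (EuclideanSpace ℝ (Fin d))) :
    ∃ c : EuclideanSpace ℝ (Fin d),
      ∀ (v : EuclideanSpace ℝ (Fin d)) (a : ℝ), v ≠ 0 →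
        (inner ℝ v c : ℝ) ≤ a →
        ((P.card : ℝ) / (d + 1)) ≤ (P.filter (fun p => (inner ℝ v p : ℝ) ≤ a)).card := by
  classical
  let E := EuclideanSpace ℝ (Fin d)
  set n : ℝ := (P.card : ℝ) with hn
  -- the family of "large" subsets of P
  set s : Finset (Finset E) :=
    P.powerset.filter (fun S => ((P \ S).card : ℝ) < n / (d + 1)) with hs
  have hd1 : (0 : ℝ) < (d : ℝ) + 1 := by positivity
  -- every d+1 (indeed any ≤ d+1) hulls of members of s intersect
  have h_inter : ∀ I ⊆ s, #I ≤ Module.finrank ℝ E + 1 →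
      (⋂ S ∈ I, convexHull ℝ (S : Set E)).Nonempty := by
    intro I hI hIcard
    rcases I.eq_empty_or_nonempty with rfl | hIne
    · simp
    have hrank : Module.finrank ℝ E = d := finrank_euclideanSpace_fin
    rw [hrank] at hIcard
    -- find a common point of all S ∈ I
    have hsub : I.biUnion (fun S => P \ S) ⊆ P := by
      intro x hx
      rcases Finset.mem_biUnion.1 hx with ⟨S, _, hxS⟩
      exact (Finset.mem_sdiff.1 hxS).1
    have hcard : ((I.biUnion (fun S => P \ S)).card : ℝ) < n := by
      calc ((I.biUnion (fun S => P \ S)).card : ℝ)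
          ≤ ∑ S ∈ I, ((P \ S).card : ℝ) := by
            exact_mod_cast Nat.cast_le.2 (Finset.card_biUnion_le)
        _ < ∑ S ∈ I, n / (d + 1) := by
            apply Finset.sum_lt_sum_of_nonempty hIne
            intro S hS
            exact (Finset.mem_filter.1 (hI hS)).2
        _ = #I * (n / (d + 1)) := by rw [Finset.sum_const, nsmul_eq_mul]
        _ ≤ (d + 1) * (n / (d + 1)) := by
            apply mul_le_mul_of_nonneg_right
            · exact_mod_cast hIcard
            · positivity
        _ = n := by field_simp
    have : I.biUnion (fun S => P \ S) ⊂ P :=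
      lt_of_le_of_ne hsub (by
        intro h; rw [h] at hcard; exact lt_irrefl _ hcard)
    obtain ⟨p, hpP, hpU⟩ := Finset.exists_of_ssubset this
    refine ⟨p, Set.mem_iInter₂.2 fun S hS => ?_⟩
    have hpS : p ∈ S := by
      by_contra hpS
      exact hpU (Finset.mem_biUnion.2 ⟨S, hS, Finset.mem_sdiff.2 ⟨hpP, hpS⟩⟩)
    exact subset_convexHull ℝ _ hpS
  obtain ⟨c, hc⟩ := Convex.helly_theorem' (𝕜 := ℝ)
    (F := fun S : Finset E => convexHull ℝ (S : Set E)) (s := s)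
    (fun S _ => convex_convexHull ℝ _) h_inter
  refine ⟨c, fun v a hv hca => ?_⟩
  by_contra hlt
  push_neg at hlt
  set S : Finset E := P.filter (fun p => ¬ ((inner ℝ v p : ℝ) ≤ a)) with hS
  have hSP : P \ S = P.filter (fun p => (inner ℝ v p : ℝ) ≤ a) := by
    ext x
    simp only [hS, Finset.mem_sdiff, Finset.mem_filter, not_and, not_not]
    tauto
  have hSs : S ∈ s := by
    rw [hs, Finset.mem_filter, Finset.mem_powerset]
    exact ⟨Finset.filter_subset _ _, by rw [hSP]; exact hlt⟩
  have hcS : c ∈ convexHull ℝ (S : Set E) := Set.mem_iInter₂.1 hc S hSs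
  have hhalf : (S : Set E) ⊆ {x : E | a < (inner ℝ v x : ℝ)} := by
    intro x hx
    have := (Finset.mem_filter.1 hx).2
    exact lt_of_not_ge this
  have hconv : Convex ℝ {x : E | a < (inner ℝ v x : ℝ)} :=
    convex_halfSpace_gt ⟨fun x y => inner_add_right v x y,
      fun c x => real_inner_smul_right v x c⟩ a
  have := convexHull_min hhalf hconv hcS
  exact absurd hca (not_le.2 this)
end

section
/- Let (X, R) be the range space where X = R^d and R is the set of all closed balls in R^d. Then the VC dimension of (X, R) is d + 1. -/
/-- A family of ranges `R` shatters a finite set `S` if every subset of `S` is cut out by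
some range. -/
def ShattersFam {α : Type*} (R : Set (Set α)) (S : Finset α) : Prop :=
  ∀ T ⊆ S, ∃ r ∈ R, ∀ x ∈ S, (x ∈ r ↔ x ∈ T)

/-- The family of all closed balls in `ℝ^d`. -/
def ballRanges (d : ℕ) : Set (Set (EuclideanSpace ℝ (Fin d))) :=
  { b | ∃ (c : EuclideanSpace ℝ (Fin d)) (ρ : ℝ), b = Metric.closedBall c ρ }

open Finset

lemma dist_sqrt' {d : ℕ} (x c : EuclideanSpace ℝ (Fin d)) :
    dist x c = Real.sqrt (∑ j, (x j - c j)^2) := by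
  rw [EuclideanSpace.dist_eq]
  congr 1
  exact Finset.sum_congr rfl fun j _ => by rw [Real.dist_eq, sq_abs]

lemma center_apply {d : ℕ} (A : Finset (Fin d)) (j : Fin d) :
    (∑ i ∈ A, EuclideanSpace.single i (1:ℝ)) j = if j ∈ A then 1 else 0 := by
  classical
  rw [WithLp.ofLp_sum, Finset.sum_apply]
  simp [EuclideanSpace.single_apply]

lemma sum_zero_case {d : ℕ} (A : Finset (Fin d)) :
    (∑ j, ((0:ℝ) - if j ∈ A then (1:ℝ) else 0)^2) = A.card := by
  classical
  rw [Finset.sum_congr rfl (fun j _ => by split_ifs <;> norm_num :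
    ∀ j ∈ univ, ((0:ℝ) - if j ∈ A then (1:ℝ) else 0)^2 = if j ∈ A then 1 else 0)]
  simp [Finset.sum_ite_mem]

lemma sum_single_case {d : ℕ} (A : Finset (Fin d)) (j0 : Fin d) :
    (∑ j, ((EuclideanSpace.single j0 (1:ℝ)) j - if j ∈ A then (1:ℝ) else 0)^2)
      = A.card + (if j0 ∈ A then (-1:ℝ) else 1) := by
  classical
  have h : ∀ j ∈ univ, ((EuclideanSpace.single j0 (1:ℝ)) j - if j ∈ A then (1:ℝ) else 0)^2
      = (if j ∈ A then (1:ℝ) else 0) + (if j = j0 then (if j0 ∈ A then (-1:ℝ) else 1) else 0) := by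
    intro j _
    rcases eq_or_ne j j0 with rfl | hne
    · simp [EuclideanSpace.single_apply]
      split_ifs <;> norm_num
    · simp only [EuclideanSpace.single_apply, if_neg hne, if_neg hne]
      split_ifs <;> norm_num
  rw [Finset.sum_congr rfl h, Finset.sum_add_distrib]
  simp [Finset.sum_ite_mem, Finset.sum_ite_eq']

lemma dist_to_center_zero {d : ℕ} (A : Finset (Fin d)) :
    dist (0 : EuclideanSpace ℝ (Fin d)) (∑ i ∈ A, EuclideanSpace.single i (1:ℝ))
      = Real.sqrt A.card := by
  rw [dist_sqrt']
  congr 1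
  calc (∑ j, ((0:EuclideanSpace ℝ (Fin d)) j - (∑ i ∈ A, EuclideanSpace.single i (1:ℝ)) j)^2)
      = ∑ j, ((0:ℝ) - if j ∈ A then (1:ℝ) else 0)^2 := by
        refine Finset.sum_congr rfl fun j _ => by rw [center_apply]; rfl
    _ = A.card := sum_zero_case A

lemma dist_to_center_single {d : ℕ} (A : Finset (Fin d)) (j0 : Fin d) :
    dist (EuclideanSpace.single j0 (1:ℝ)) (∑ i ∈ A, EuclideanSpace.single i (1:ℝ))
      = Real.sqrt (A.card + if j0 ∈ A then (-1:ℝ) else 1) := by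
  rw [dist_sqrt']
  congr 1
  calc (∑ j, ((EuclideanSpace.single j0 (1:ℝ)) j - (∑ i ∈ A, EuclideanSpace.single i (1:ℝ)) j)^2)
      = ∑ j, ((EuclideanSpace.single j0 (1:ℝ)) j - if j ∈ A then (1:ℝ) else 0)^2 := by
        refine Finset.sum_congr rfl fun j _ => by rw [center_apply]
    _ = _ := sum_single_case A j0

lemma single_injective (d : ℕ) :
    Function.Injective (fun i : Fin d => EuclideanSpace.single i (1:ℝ)) := by
  intro i i' h
  by_contra hne
  have := congrArg (fun v => v i) h
  simp [EuclideanSpace.single_apply, hne] at this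

lemma single_ne_zero {d : ℕ} (i : Fin d) :
    EuclideanSpace.single i (1:ℝ) ≠ 0 := by
  intro h
  have := congrArg (fun v => v i) h
  simp [EuclideanSpace.single_apply] at this

lemma shatter_lower (d : ℕ) :
    ∃ S : Finset (EuclideanSpace ℝ (Fin d)),
        S.card = d + 1 ∧ ShattersFam (ballRanges d) S := by
  classical
  set e : Fin d → EuclideanSpace ℝ (Fin d) := fun i => EuclideanSpace.single i (1:ℝ) with he
  refine ⟨insert 0 (univ.image e), ?_, ?_⟩
  · rw [Finset.card_insert_of_notMem, Finset.card_image_of_injective _ (single_injective d)]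
    · simp
    · simp only [Finset.mem_image]
      rintro ⟨i, -, hi⟩
      exact single_ne_zero i hi
  · intro T hT
    set A : Finset (Fin d) := univ.filter (fun i => e i ∈ T) with hA
    set c : EuclideanSpace ℝ (Fin d) := ∑ i ∈ A, EuclideanSpace.single i (1:ℝ) with hc
    have hmemA : ∀ j, j ∈ A ↔ e j ∈ T := by intro j; simp [hA]
    have hk0 : (0:ℝ) ≤ (A.card : ℝ) := Nat.cast_nonneg _
    by_cases h0 : (0 : EuclideanSpace ℝ (Fin d)) ∈ T
    · refine ⟨Metric.closedBall c (Real.sqrt A.card), ⟨c, _, rfl⟩, ?_⟩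
      intro x hx
      rcases Finset.mem_insert.1 hx with rfl | hx
      · simp only [Metric.mem_closedBall, hc, dist_to_center_zero A]
        exact iff_of_true le_rfl h0
      · obtain ⟨j, -, rfl⟩ := Finset.mem_image.1 hx
        simp only [Metric.mem_closedBall, he, hc, dist_to_center_single A j]
        by_cases hj : j ∈ A
        · rw [if_pos hj]
          exact iff_of_true (Real.sqrt_le_sqrt (by linarith)) ((hmemA j).1 hj)
        · rw [if_neg hj]
          refine iff_of_false ?_ (fun h => hj ((hmemA j).2 h))
          push_neg
          exact Real.sqrt_lt_sqrt hk0 (by linarith)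
    · rcases Finset.eq_empty_or_nonempty A with hAe | hAne
      · have hTe : T = ∅ := by
          rw [Finset.eq_empty_iff_forall_notMem]
          intro x hxT
          rcases Finset.mem_insert.1 (hT hxT) with rfl | hx
          · exact h0 hxT
          · obtain ⟨j, -, rfl⟩ := Finset.mem_image.1 hx
            have : j ∈ A := (hmemA j).2 hxT
            simp [hAe] at this
        refine ⟨Metric.closedBall 0 (-1), ⟨0, -1, rfl⟩, ?_⟩
        intro x hx
        rw [Metric.closedBall_eq_empty.2 (by norm_num), hTe]
        simp
      · have hk1 : (1:ℝ) ≤ (A.card : ℝ) := by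
          exact_mod_cast Finset.card_pos.2 hAne
        refine ⟨Metric.closedBall c (Real.sqrt ((A.card : ℝ) - 1)), ⟨c, _, rfl⟩, ?_⟩
        intro x hx
        rcases Finset.mem_insert.1 hx with rfl | hx
        · simp only [Metric.mem_closedBall, hc, dist_to_center_zero A]
          refine iff_of_false ?_ h0
          push_neg
          exact Real.sqrt_lt_sqrt (by linarith) (by linarith)
        · obtain ⟨j, -, rfl⟩ := Finset.mem_image.1 hx
          simp only [Metric.mem_closedBall, he, hc, dist_to_center_single A j]
          by_cases hj : j ∈ A
          · rw [if_pos hj]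
            exact iff_of_true (Real.sqrt_le_sqrt (by linarith)) ((hmemA j).1 hj)
          · rw [if_neg hj]
            refine iff_of_false ?_ (fun h => hj ((hmemA j).2 h))
            push_neg
            exact Real.sqrt_lt_sqrt (by linarith) (by linarith)

lemma shatter_upper (d : ℕ) (S : Finset (EuclideanSpace ℝ (Fin d)))
    (hS : ShattersFam (ballRanges d) S) : S.card ≤ d + 1 := by
  classical
  by_contra hbig
  push_neg at hbig
  set f : {x // x ∈ S} → EuclideanSpace ℝ (Fin d) := Subtype.val with hf
  have hnai : ¬ AffineIndependent ℝ f := by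
    intro hai
    have h1 := hai.card_le_finrank_succ
    have h2 : Module.finrank ℝ (vectorSpan ℝ (Set.range f)) ≤ Module.finrank ℝ (EuclideanSpace ℝ (Fin d)) :=
      Submodule.finrank_le _
    rw [Fintype.card_coe] at h1
    have : Module.finrank ℝ (EuclideanSpace ℝ (Fin d)) = d := finrank_euclideanSpace_fin
    omega
  obtain ⟨I, p, hpI, hpIc⟩ := Convex.radon_partition hnai
  set T : Finset (EuclideanSpace ℝ (Fin d)) := S.filter (fun x => ∃ h : x ∈ S, (⟨x, h⟩ : {x // x ∈ S}) ∈ I) with hTdef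
  have hTsub : T ⊆ S := Finset.filter_subset _ _
  have himg : f '' I = (↑T : Set (EuclideanSpace ℝ (Fin d))) := by
    ext x
    constructor
    · rintro ⟨⟨y, hy⟩, hyI, rfl⟩
      exact Finset.mem_coe.2 (Finset.mem_filter.2 ⟨hy, hy, hyI⟩)
    · intro hx
      obtain ⟨hxS, hxS', hxI⟩ := Finset.mem_filter.1 (Finset.mem_coe.1 hx)
      exact ⟨⟨x, hxS'⟩, hxI, rfl⟩
  have himgc : f '' Iᶜ = (↑(S \ T) : Set (EuclideanSpace ℝ (Fin d))) := by
    ext x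
    constructor
    · rintro ⟨⟨y, hy⟩, hyI, rfl⟩
      refine Finset.mem_coe.2 (Finset.mem_sdiff.2 ⟨hy, fun hmem => ?_⟩)
      obtain ⟨-, h', hI⟩ := Finset.mem_filter.1 hmem
      exact hyI hI
    · intro hx
      obtain ⟨hxS, hxT⟩ := Finset.mem_sdiff.1 (Finset.mem_coe.1 hx)
      refine ⟨⟨x, hxS⟩, fun hI => hxT (Finset.mem_filter.2 ⟨hxS, hxS, hI⟩), rfl⟩
  rw [himg] at hpI
  rw [himgc] at hpIc
  obtain ⟨r1, ⟨c1, ρ1, rfl⟩, h1⟩ := hS T hTsub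
  obtain ⟨r2, ⟨c2, ρ2, rfl⟩, h2⟩ := hS (S \ T) (Finset.sdiff_subset)
  -- nonemptiness
  obtain ⟨t0, ht0⟩ : (↑T : Set (EuclideanSpace ℝ (Fin d))).Nonempty := by
    rcases Set.eq_empty_or_nonempty (↑T : Set (EuclideanSpace ℝ (Fin d))) with h | h
    · rw [h, convexHull_empty] at hpI; exact absurd hpI (Set.notMem_empty p)
    · exact h
  obtain ⟨u0, hu0⟩ : (↑(S \ T) : Set (EuclideanSpace ℝ (Fin d))).Nonempty := by
    rcases Set.eq_empty_or_nonempty (↑(S \ T) : Set (EuclideanSpace ℝ (Fin d))) with h | h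
    · rw [h, convexHull_empty] at hpIc; exact absurd hpIc (Set.notMem_empty p)
    · exact h
  have hρ1 : 0 ≤ ρ1 := le_trans dist_nonneg
    ((h1 t0 (hTsub (Finset.mem_coe.1 ht0))).2 (Finset.mem_coe.1 ht0))
  have hρ2 : 0 ≤ ρ2 := le_trans dist_nonneg
    ((h2 u0 (Finset.sdiff_subset (Finset.mem_coe.1 hu0))).2 (Finset.mem_coe.1 hu0))
  set g : EuclideanSpace ℝ (Fin d) → ℝ := fun y => (inner ℝ y (c2 - c1) : ℝ) with hg
  have hglin : IsLinearMap ℝ g := ⟨fun a b => inner_add_left a b _, fun r a => real_inner_smul_left a _ r⟩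
  set r : ℝ := (ρ1^2 - ρ2^2 - ‖c1‖^2 + ‖c2‖^2) / 2 with hr
  have key1 : ∀ x ∈ (↑T : Set (EuclideanSpace ℝ (Fin d))), g x < r := by
    intro x hx
    have hxT := Finset.mem_coe.1 hx
    have hxS := hTsub hxT
    have d1 : dist x c1 ≤ ρ1 := (h1 x hxS).2 hxT
    have d2 : ρ2 < dist x c2 := lt_of_not_ge fun h =>
      (Finset.mem_sdiff.1 ((h2 x hxS).1 h)).2 hxT
    have sq1 : dist x c1 ^ 2 ≤ ρ1 ^ 2 := pow_le_pow_left₀ dist_nonneg d1 2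
    have sq2 : ρ2 ^ 2 < dist x c2 ^ 2 := pow_lt_pow_left₀ d2 hρ2 two_ne_zero
    rw [dist_eq_norm, norm_sub_sq_real] at sq1 sq2
    have hgx : g x = (inner ℝ x c2 : ℝ) - (inner ℝ x c1 : ℝ) := inner_sub_right x c2 c1
    rw [hgx, hr]
    linarith
  have key2 : ∀ x ∈ (↑(S \ T) : Set (EuclideanSpace ℝ (Fin d))), r < g x := by
    intro x hx
    have hxST := Finset.mem_coe.1 hx
    have hxS := Finset.sdiff_subset hxST
    have d2 : dist x c2 ≤ ρ2 := (h2 x hxS).2 hxST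
    have d1 : ρ1 < dist x c1 := lt_of_not_ge fun h =>
      (Finset.mem_sdiff.1 hxST).2 ((h1 x hxS).1 h)
    have sq2 : dist x c2 ^ 2 ≤ ρ2 ^ 2 := pow_le_pow_left₀ dist_nonneg d2 2
    have sq1 : ρ1 ^ 2 < dist x c1 ^ 2 := pow_lt_pow_left₀ d1 hρ1 two_ne_zero
    rw [dist_eq_norm, norm_sub_sq_real] at sq1 sq2
    have hgx : g x = (inner ℝ x c2 : ℝ) - (inner ℝ x c1 : ℝ) := inner_sub_right x c2 c1
    rw [hgx, hr]
    linarith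
  have hp1 : g p < r := convexHull_min key1 (convex_halfSpace_lt hglin r) hpI
  have hp2 : r < g p := convexHull_min key2 (by
    have : Convex ℝ {y : EuclideanSpace ℝ (Fin d) | r < g y} := convex_halfSpace_gt hglin r
    exact this) hpIc
  linarith

/-- **VC dimension of balls.** The range space of closed balls in `ℝ^d` has VC dimension
exactly `d + 1`: some set of `d + 1` points is shattered, and no set of more than `d + 1`
points is shattered. -/
theorem vc_dim_balls (d : ℕ) :
    (∃ S : Finset (EuclideanSpace ℝ (Fin d)),
        S.card = d + 1 ∧ ShattersFam (ballRanges d) S) ∧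
    (∀ S : Finset (EuclideanSpace ℝ (Fin d)),
        ShattersFam (ballRanges d) S → S.card ≤ d + 1) := by
  exact ⟨shatter_lower d, fun S h => shatter_upper d S h⟩
end
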